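/- Let n ≥ 2 and let z : Fin n → ℂ be admissible with Δ(z) = Δmax(n) (a maximizer). Then for every index i, the point z i is an extreme point (over ℝ) of the convex hull (over ℝ) of the set of points {z j : j ∈ Fin n}, viewing ℂ as a real vector space. -/

import Mathlib

/-- The product over all ordered pairs `(i,j)` with `i ≠ j` of `dist (z i) (z j)`. -/
noncomputable def Delta (n : ℕ) (z : Fin n → ℂ) : ℝ :=
  ∏ p ∈ Finset.univ.filter (fun p : Fin n × Fin n => p.1 ≠ p.2), dist (z p.1) (z p.2)

/-- `z` is admissible if all pairwise distances are at most 2. -/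
def Admissible (n : ℕ) (z : Fin n → ℂ) : Prop :=
  ∀ i j, dist (z i) (z j) ≤ 2

/-- The maximal discriminant over admissible configurations. -/
noncomputable def Dmax (n : ℕ) : ℝ :=
  sSup {d : ℝ | ∃ z : Fin n → ℂ, Admissible n z ∧ Delta n z = d}

open Finset

lemma Delta_decomp (n : ℕ) (z : Fin n → ℂ) (i : Fin n) :
    Delta n z = (∏ b ∈ univ.erase i, dist (z i) (z b)) ^ 2 *
      ∏ a ∈ univ.erase i, ∏ b ∈ univ.erase i,
        if a ≠ b then dist (z a) (z b) else 1 := by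
  have h1 : Delta n z = ∏ a : Fin n, ∏ b : Fin n,
      if a ≠ b then dist (z a) (z b) else 1 := by
    rw [Delta, Finset.prod_filter, Fintype.prod_prod_type]
  have huniv : ∀ (a : Fin n) (f : Fin n → ℝ),
      (∏ b : Fin n, f b) = f a * ∏ b ∈ univ.erase a, f b :=
    fun a f => (Finset.mul_prod_erase univ f (mem_univ a)).symm
  rw [h1, huniv i]
  have h2 : (∏ b : Fin n, if i ≠ b then dist (z i) (z b) else 1)
      = ∏ b ∈ univ.erase i, dist (z i) (z b) := by
    rw [huniv i, if_neg (by simp), one_mul]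
    refine Finset.prod_congr rfl fun b hb => if_pos ?_
    exact fun h => (Finset.ne_of_mem_erase hb) h.symm
  have h3 : (∏ a ∈ univ.erase i, ∏ b : Fin n, if a ≠ b then dist (z a) (z b) else 1)
      = (∏ a ∈ univ.erase i, dist (z i) (z a)) *
        ∏ a ∈ univ.erase i, ∏ b ∈ univ.erase i, if a ≠ b then dist (z a) (z b) else 1 := by
    rw [← Finset.prod_mul_distrib]
    refine Finset.prod_congr rfl fun a ha => ?_
    rw [huniv i, if_pos (Finset.ne_of_mem_erase ha), dist_comm]
  rw [h2, h3, sq]; ring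

lemma bddAbove_deltaSet (n : ℕ) :
    BddAbove {d : ℝ | ∃ z : Fin n → ℂ, Admissible n z ∧ Delta n z = d} := by
  refine ⟨2 ^ (univ.filter (fun p : Fin n × Fin n => p.1 ≠ p.2)).card, ?_⟩
  rintro d ⟨z, hz, rfl⟩
  calc Delta n z ≤ ∏ _p ∈ univ.filter (fun p : Fin n × Fin n => p.1 ≠ p.2), 2 :=
        Finset.prod_le_prod (fun p _ => dist_nonneg) (fun p _ => hz p.1 p.2)
    _ = _ := by rw [Finset.prod_const]

lemma Delta_le_Dmax (n : ℕ) (z : Fin n → ℂ) (hz : Admissible n z) :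
    Delta n z ≤ Dmax n :=
  le_csSup (bddAbove_deltaSet n) ⟨z, hz, rfl⟩

lemma Dmax_pos (n : ℕ) (hn : 2 ≤ n) : 0 < Dmax n := by
  have hn0 : (0:ℝ) < n := by positivity
  set z0 : Fin n → ℂ := fun k => (((k : ℝ) / n : ℝ) : ℂ) with hz0
  have hinj : Function.Injective z0 := by
    intro a b hab
    have : (a : ℝ) / n = (b : ℝ) / n := by
      rw [hz0] at hab; simp only at hab; exact_mod_cast hab
    have : (a : ℝ) = b := by field_simp at this; exact_mod_cast this
    exact Fin.ext (by exact_mod_cast this)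
  have hadm : Admissible n z0 := by
    intro a b
    have : dist (z0 a) (z0 b) = |(a : ℝ) / n - (b : ℝ) / n| := by
      rw [hz0]; simp only [Complex.dist_eq, ← Complex.ofReal_sub, Complex.norm_real, Real.norm_eq_abs]
    rw [this]
    have ha : (a:ℝ)/n ≤ 1 := by
      rw [div_le_one hn0]; exact_mod_cast (a.2.le)
    have hb : (b:ℝ)/n ≤ 1 := by
      rw [div_le_one hn0]; exact_mod_cast (b.2.le)
    have ha0 : 0 ≤ (a:ℝ)/n := by positivity
    have hb0 : 0 ≤ (b:ℝ)/n := by positivity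
    rw [abs_sub_le_iff]; constructor <;> linarith
  have hpos : 0 < Delta n z0 := by
    refine Finset.prod_pos fun p hp => ?_
    rw [dist_pos]
    exact fun h => (Finset.mem_filter.1 hp).2 (hinj h)
  exact lt_of_lt_of_le hpos (Delta_le_Dmax n z0 hadm)

theorem stmt4 (n : ℕ) (hn : 2 ≤ n) (z : Fin n → ℂ)
    (hadm : Admissible n z) (hmax : Delta n z = Dmax n) :
    ∀ i : Fin n, z i ∈ Set.extremePoints ℝ (convexHull ℝ (Set.range z)) := by
  have hDpos : 0 < Delta n z := hmax ▸ Dmax_pos n hn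
  have hne : ∀ i j : Fin n, i ≠ j → z i ≠ z j := by
    intro i j hij h
    have : Delta n z = 0 :=
      Finset.prod_eq_zero (Finset.mem_filter.2 ⟨Finset.mem_univ (i, j), hij⟩)
        (by simpa [dist_eq_zero] using h)
    linarith
  intro i
  have hmem : z i ∈ convexHull ℝ (Set.range z) :=
    subset_convexHull ℝ _ (Set.mem_range_self i)
  by_cases hex : ∃ j, j ≠ i ∧ dist (z i) (z j) = 2
  · -- z i is on a sphere of radius 2 around some z j; strict convexity
    obtain ⟨j, hji, hd2⟩ := hex
    have hsub : convexHull ℝ (Set.range z) ⊆ Metric.closedBall (z j) 2 := by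
      refine convexHull_min ?_ (convex_closedBall _ _)
      rintro x ⟨k, rfl⟩
      exact Metric.mem_closedBall.2 (hadm k j)
    refine ⟨hmem, fun x₁ h₁ x₂ h₂ hseg => ?_⟩
    by_cases h12 : x₁ = x₂
    · subst h12
      rw [openSegment_same] at hseg
      simp only [Set.mem_singleton_iff] at hseg
      exact hseg.symm
    · exfalso
      have hball : z i ∈ interior (Metric.closedBall (z j) 2) :=
        (strictConvex_closedBall ℝ (z j) 2).openSegment_subset (hsub h₁) (hsub h₂) h12 hseg
      rw [interior_closedBall _ (by norm_num)] at hball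
      have := Metric.mem_ball.1 hball
      rw [hd2] at this
      exact lt_irrefl _ this
  · -- all distances from z i strictly less than 2: contradiction with maximality
    exfalso
    push_neg at hex
    have hlt : ∀ j ∈ univ.erase i, dist (z i) (z j) < 2 := by
      intro j hj
      exact lt_of_le_of_ne (hadm i j) (hex j (Finset.ne_of_mem_erase hj))
    have hne' : (univ.erase i).Nonempty := by
      rw [← Finset.card_pos, Finset.card_erase_of_mem (mem_univ i), Finset.card_univ,
        Fintype.card_fin]
      omega
    set ε : ℝ := (univ.erase i).inf' hne' (fun j => 2 - dist (z i) (z j)) with hε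
    have hεpos : 0 < ε := by
      rw [hε, Finset.lt_inf'_iff]
      intro j hj
      linarith [hlt j hj]
    -- the polynomial
    set p : Polynomial ℂ := ∏ b ∈ univ.erase i, (Polynomial.X - Polynomial.C (z b)) with hp
    have hevalnorm : ∀ w : ℂ, ‖p.eval w‖ = ∏ b ∈ univ.erase i, dist w (z b) := by
      intro w
      rw [hp, Polynomial.eval_prod, norm_prod]
      exact Finset.prod_congr rfl fun b _ => by
        simp [dist_eq_norm]
    -- maximality on the closed ball
    have hmaxball : ∀ w ∈ Metric.closedBall (z i) ε, ‖p.eval w‖ ≤ ‖p.eval (z i)‖ := by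
      intro w hw
      have hwd : ∀ j ∈ univ.erase i, dist w (z j) ≤ 2 := by
        intro j hj
        have h1 : dist w (z j) ≤ dist w (z i) + dist (z i) (z j) := dist_triangle _ _ _
        have h2 : dist w (z i) ≤ ε := Metric.mem_closedBall.1 hw
        have h3 : ε ≤ 2 - dist (z i) (z j) := Finset.inf'_le _ hj
        linarith
      set z' : Fin n → ℂ := Function.update z i w with hz'
      have hz'eq : ∀ j ∈ univ.erase i, z' j = z j := fun j hj =>
        Function.update_of_ne (Finset.ne_of_mem_erase hj) _ _
      have hadm' : Admissible n z' := by
        intro a b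
        by_cases ha : a = i <;> by_cases hb : b = i
        · subst ha; subst hb; simp
        · subst ha
          rw [hz', Function.update_self, Function.update_of_ne hb]
          exact hwd b (Finset.mem_erase.2 ⟨hb, mem_univ b⟩)
        · subst hb
          rw [hz', Function.update_self, Function.update_of_ne ha, dist_comm]
          exact hwd a (Finset.mem_erase.2 ⟨ha, mem_univ a⟩)
        · rw [hz', Function.update_of_ne ha, Function.update_of_ne hb]
          exact hadm a b
      have hle : Delta n z' ≤ Delta n z := hmax ▸ Delta_le_Dmax n z' hadm'
      rw [Delta_decomp n z' i, Delta_decomp n z i] at hle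
      have hR : (∏ a ∈ univ.erase i, ∏ b ∈ univ.erase i,
          if a ≠ b then dist (z' a) (z' b) else 1)
          = ∏ a ∈ univ.erase i, ∏ b ∈ univ.erase i,
          if a ≠ b then dist (z a) (z b) else 1 := by
        refine Finset.prod_congr rfl fun a ha => Finset.prod_congr rfl fun b hb => ?_
        rw [hz'eq a ha, hz'eq b hb]
      have hRpos : 0 < ∏ a ∈ univ.erase i, ∏ b ∈ univ.erase i,
          if a ≠ b then dist (z a) (z b) else 1 := by
        refine Finset.prod_pos fun a ha => Finset.prod_pos fun b hb => ?_
        split_ifs with h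
        · exact dist_pos.2 (hne a b h)
        · norm_num
      rw [hR] at hle
      have hsq : (∏ b ∈ univ.erase i, dist (z' i) (z' b)) ^ 2
          ≤ (∏ b ∈ univ.erase i, dist (z i) (z b)) ^ 2 :=
        le_of_mul_le_mul_right hle hRpos
      have hz'i : z' i = w := Function.update_self i w z
      have hprodeq : (∏ b ∈ univ.erase i, dist (z' i) (z' b))
          = ∏ b ∈ univ.erase i, dist w (z b) := by
        refine Finset.prod_congr rfl fun b hb => ?_
        rw [hz'i, hz'eq b hb]
      rw [hprodeq] at hsq
      rw [hevalnorm, hevalnorm]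
      have h1 : 0 ≤ ∏ b ∈ univ.erase i, dist w (z b) :=
        Finset.prod_nonneg fun b _ => dist_nonneg
      have h2 : 0 ≤ ∏ b ∈ univ.erase i, dist (z i) (z b) :=
        Finset.prod_nonneg fun b _ => dist_nonneg
      nlinarith [hsq]
    -- maximum modulus principle
    have hlocal : IsLocalMax (norm ∘ fun w => p.eval w) (z i) := by
      have hball : Metric.closedBall (z i) ε ∈ nhds (z i) :=
        Metric.closedBall_mem_nhds _ hεpos
      exact Filter.eventually_iff_exists_mem.2 ⟨_, hball, fun w hw => hmaxball w hw⟩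
    have heq : ∀ᶠ y in nhds (z i), p.eval y = p.eval (z i) :=
      Complex.eventually_eq_of_isLocalMax_norm
        (Filter.Eventually.of_forall fun w => (Polynomial.differentiable p).differentiableAt)
        hlocal
    obtain ⟨s, hs, hsub'⟩ := Filter.eventually_iff_exists_mem.1 heq
    have hinf : {x : ℂ | Polynomial.IsRoot (p - Polynomial.C (p.eval (z i))) x}.Infinite := by
      refine (infinite_of_mem_nhds (z i) hs).mono ?_
      intro x hx
      simp [Polynomial.IsRoot, hsub' x hx]
    have hq0 : p - Polynomial.C (p.eval (z i)) = 0 :=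
      Polynomial.eq_zero_of_infinite_isRoot _ hinf
    have hdeg : p.natDegree = n - 1 := by
      rw [hp, Polynomial.natDegree_prod _ _ (fun b _ => Polynomial.X_sub_C_ne_zero (z b))]
      simp [Finset.card_erase_of_mem]
    have hpc : p = Polynomial.C (p.eval (z i)) := by
      linear_combination (norm := ring_nf) hq0
    rw [hpc] at hdeg
    rw [Polynomial.natDegree_C] at hdeg
    omega
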